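/- Let S ⊆ ℕ be a finite set with 0 ∈ S and |S| = k ≥ 2. Then z_S ≤ 1/4 + (2/π)·(√(k−1) − 1); in particular z_S ≤ (2/π)·√(k−1). -/

import Mathlib

set_option maxHeartbeats 1000000

open Real Finset

/-- `g_S(t) = ∑_{e ∈ S} t^(2e)`. -/
noncomputable def gS (S : Finset ℕ) (t : ℝ) : ℝ := ∑ e ∈ S, t ^ (2 * e)

/-- `h_S(t) = ∑_{e ∈ S} e² t^(2e-2)` (the term for `e = 0` being `0`). -/
noncomputable def hS (S : Finset ℕ) (t : ℝ) : ℝ := ∑ e ∈ S, (e : ℝ) ^ 2 * t ^ (2 * e - 2)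

/-- `q_S(t) = ∑_{e ∈ S} e t^(2e-1)` (the term for `e = 0` being `0`). -/
noncomputable def qS (S : Finset ℕ) (t : ℝ) : ℝ := ∑ e ∈ S, (e : ℝ) * t ^ (2 * e - 1)

/-- `E_S(t) = g_S(t) h_S(t) - q_S(t)²`. -/
noncomputable def ES (S : Finset ℕ) (t : ℝ) : ℝ := gS S t * hS S t - qS S t ^ 2

/-- The expected number of real zeros in `(0,1)`, given by the Edelman–Kostlan integral. -/
noncomputable def zS (S : Finset ℕ) : ℝ :=
  (1 / Real.pi) * ∫ t in (0 : ℝ)..1, Real.sqrt (ES S t) / gS S t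

/-! ### Auxiliary definitions -/

noncomputable def A1S (S : Finset ℕ) (t : ℝ) : ℝ := ∑ e ∈ S, (e : ℝ) * t ^ (2 * e)
noncomputable def A2S (S : Finset ℕ) (t : ℝ) : ℝ := ∑ e ∈ S, (e : ℝ) ^ 2 * t ^ (2 * e)
noncomputable def PPa (B : Finset ℕ) (a : ℕ) (t : ℝ) : ℝ := (a : ℝ) * gS B t - A1S B t
noncomputable def bnd (n : ℕ) : ℝ :=
  ∑ j ∈ Finset.range (n - 1), Real.arctan (1 / Real.sqrt ((j : ℝ) + 1))

/-! ### Basic algebraic lemmas -/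

lemma pow_two_mul_nonneg (t : ℝ) (e : ℕ) : 0 ≤ t ^ (2 * e) := by
  rw [mul_comm, pow_mul]; positivity

lemma t2_hS (S : Finset ℕ) (t : ℝ) : t ^ 2 * hS S t = A2S S t := by
  unfold hS A2S
  rw [Finset.mul_sum]
  refine Finset.sum_congr rfl fun e _ => ?_
  cases e with
  | zero => simp
  | succ m =>
    have h1 : 2 * (m + 1) - 2 = 2 * m := by omega
    have h2 : 2 * (m + 1) = 2 * m + 2 := by omega
    rw [h1, h2, pow_add]; ring

lemma t_qS (S : Finset ℕ) (t : ℝ) : t * qS S t = A1S S t := by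
  unfold qS A1S
  rw [Finset.mul_sum]
  refine Finset.sum_congr rfl fun e _ => ?_
  cases e with
  | zero => simp
  | succ m =>
    have h1 : 2 * (m + 1) - 1 = 2 * m + 1 := by omega
    have h2 : 2 * (m + 1) = (2 * m + 1) + 1 := by omega
    rw [h1, h2, pow_succ]; ring

lemma t2_ES (S : Finset ℕ) (t : ℝ) :
    t ^ 2 * ES S t = gS S t * A2S S t - A1S S t ^ 2 := by
  have h1 := t2_hS S t
  have h2 := t_qS S t
  unfold ES
  linear_combination gS S t * h1 - (t * qS S t + A1S S t) * h2

lemma one_le_gS {S : Finset ℕ} (h0 : 0 ∈ S) (t : ℝ) : 1 ≤ gS S t := by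
  have := Finset.single_le_sum (f := fun e => t ^ (2 * e))
    (fun e _ => pow_two_mul_nonneg t e) h0
  simpa [gS] using this

lemma gS_pos {S : Finset ℕ} (h0 : 0 ∈ S) (t : ℝ) : 0 < gS S t :=
  lt_of_lt_of_le one_pos (one_le_gS h0 t)

lemma A1_sq_le (S : Finset ℕ) (t : ℝ) : A1S S t ^ 2 ≤ gS S t * A2S S t := by
  have key := Finset.sum_mul_sq_le_sq_mul_sq S (fun e => t ^ e) (fun e => (e : ℝ) * t ^ e)
  have e1 : A1S S t = ∑ e ∈ S, (t ^ e) * ((e : ℝ) * t ^ e) := by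
    unfold A1S
    refine Finset.sum_congr rfl fun e _ => ?_
    rw [two_mul, pow_add]; ring
  have e2 : gS S t = ∑ e ∈ S, (t ^ e) ^ 2 := by
    unfold gS
    refine Finset.sum_congr rfl fun e _ => ?_
    rw [mul_comm, pow_mul]
  have e3 : A2S S t = ∑ e ∈ S, ((e : ℝ) * t ^ e) ^ 2 := by
    unfold A2S
    refine Finset.sum_congr rfl fun e _ => ?_
    rw [mul_pow, mul_comm 2 e, pow_mul]
  rw [e1, e2, e3]
  exact key

lemma ES_nonneg (S : Finset ℕ) {t : ℝ} (ht : t ≠ 0) : 0 ≤ ES S t := by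
  have h := t2_ES S t
  have h2 := A1_sq_le S t
  have ht2 : 0 < t ^ 2 := by positivity
  nlinarith

/-! ### Splitting off the top exponent -/

lemma gS_split {S : Finset ℕ} {a : ℕ} (ha : a ∈ S) (t : ℝ) :
    gS S t = gS (S.erase a) t + t ^ (2 * a) :=
  (Finset.sum_erase_add S _ ha).symm

lemma A1_split {S : Finset ℕ} {a : ℕ} (ha : a ∈ S) (t : ℝ) :
    A1S S t = A1S (S.erase a) t + (a : ℝ) * t ^ (2 * a) :=
  (Finset.sum_erase_add S _ ha).symm

lemma A2_split {S : Finset ℕ} {a : ℕ} (ha : a ∈ S) (t : ℝ) :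
    A2S S t = A2S (S.erase a) t + (a : ℝ) ^ 2 * t ^ (2 * a) :=
  (Finset.sum_erase_add S _ ha).symm

lemma PPa_nonneg {S : Finset ℕ} {a : ℕ} (hmax : ∀ e ∈ S, e ≤ a) (B : Finset ℕ)
    (hB : B ⊆ S) (t : ℝ) : 0 ≤ PPa B a t := by
  unfold PPa A1S gS
  rw [Finset.mul_sum, ← Finset.sum_sub_distrib]
  refine Finset.sum_nonneg fun e he => ?_
  have h1 : (e : ℝ) ≤ (a : ℝ) := by exact_mod_cast hmax e (hB he)
  have := pow_two_mul_nonneg t e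
  nlinarith

lemma key_identity {S : Finset ℕ} {a : ℕ} (ha : a ∈ S) (t : ℝ) :
    gS (S.erase a) t * (t ^ 2 * ES S t) =
      t ^ (2 * a) * PPa (S.erase a) a t ^ 2 + (t ^ 2 * ES (S.erase a) t) * gS S t := by
  rw [t2_ES S t, t2_ES (S.erase a) t, PPa,
    gS_split ha t, A1_split ha t, A2_split ha t]
  ring

/-! ### The key pointwise bound -/

lemma key_pointwise {S : Finset ℕ} {a : ℕ} (ha : a ∈ S) (hmax : ∀ e ∈ S, e ≤ a)
    (haz : a ≠ 0) (h0B : 0 ∈ S.erase a) {t : ℝ} (ht : 0 < t) :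
    Real.sqrt (ES S t) / gS S t ≤
      t ^ (a - 1) * PPa (S.erase a) a t /
        (Real.sqrt (gS (S.erase a) t) * gS S t)
      + Real.sqrt (ES (S.erase a) t) / gS (S.erase a) t := by
  set B := S.erase a with hBdef
  have h0S : 0 ∈ S := Finset.mem_of_mem_erase h0B
  have hA0pos : 0 < gS B t := gS_pos h0B t
  have hA0one : 1 ≤ gS B t := one_le_gS h0B t
  have hgpos : 0 < gS S t := gS_pos h0S t
  have hgsplit : gS S t = gS B t + t ^ (2 * a) := gS_split ha t
  have hgge : gS B t ≤ gS S t := by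
    rw [hgsplit]; have := pow_two_mul_nonneg t a; linarith
  set s0 := Real.sqrt (gS B t) with hs0def
  have hs0pos : 0 < s0 := Real.sqrt_pos.2 hA0pos
  have hs0sq : s0 ^ 2 = gS B t := Real.sq_sqrt hA0pos.le
  have hP : 0 ≤ PPa B a t := PPa_nonneg hmax B (Finset.erase_subset _ _) t
  have hEB : 0 ≤ ES B t := ES_nonneg B ht.ne'
  have hESS : 0 ≤ ES S t := ES_nonneg S ht.ne'
  have h2a : t ^ (2 * a) = (t ^ a) ^ 2 := by rw [mul_comm, pow_mul]
  have hta : t ^ a = t ^ (a - 1) * t := by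
    conv_lhs => rw [show a = (a - 1) + 1 by omega]
    rw [pow_succ]
  set X := t ^ a * PPa B a t / s0 with hXdef
  set Y := t * Real.sqrt (ES B t) * gS S t / gS B t with hYdef
  have hXnn : 0 ≤ X := by
    apply div_nonneg _ hs0pos.le
    have : (0:ℝ) ≤ t ^ a := by positivity
    nlinarith
  have hYnn : 0 ≤ Y :=
    div_nonneg (mul_nonneg (mul_nonneg ht.le (Real.sqrt_nonneg _)) hgpos.le) hA0pos.le
  have key := key_identity ha t
  have hmain : Real.sqrt (t ^ 2 * ES S t) ≤ X + Y := by
    have hXsq : X ^ 2 = t ^ (2 * a) * PPa B a t ^ 2 / gS B t := by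
      rw [hXdef, div_pow, hs0sq, h2a]; ring
    have hYsq : Y ^ 2 = t ^ 2 * ES B t * gS S t ^ 2 / gS B t ^ 2 := by
      have hnum : (t * Real.sqrt (ES B t) * gS S t) ^ 2 = t ^ 2 * ES B t * gS S t ^ 2 := by
        rw [mul_pow, mul_pow, Real.sq_sqrt hEB]
      rw [hYdef, div_pow, hnum]
    have hle : t ^ 2 * ES S t ≤ (X + Y) ^ 2 := by
      have hid : t ^ 2 * ES S t =
          t ^ (2 * a) * PPa B a t ^ 2 / gS B t + t ^ 2 * ES B t * gS S t / gS B t := by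
        field_simp
        linarith [key]
      have hYbig : t ^ 2 * ES B t * gS S t / gS B t ≤ Y ^ 2 := by
        rw [hYsq]
        rw [div_le_div_iff₀ hA0pos (by positivity)]
        have h2 : 0 ≤ t ^ 2 * ES B t := by positivity
        nlinarith [mul_nonneg h2 (mul_nonneg (mul_pos hgpos hA0pos).le (sub_nonneg.2 hgge))]
      have hcross : 0 ≤ 2 * X * Y := by positivity
      calc t ^ 2 * ES S t = t ^ (2 * a) * PPa B a t ^ 2 / gS B t
            + t ^ 2 * ES B t * gS S t / gS B t := hid
        _ ≤ X ^ 2 + Y ^ 2 := by rw [hXsq]; linarith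
        _ ≤ (X + Y) ^ 2 := by nlinarith
    calc Real.sqrt (t ^ 2 * ES S t) ≤ Real.sqrt ((X + Y) ^ 2) := Real.sqrt_le_sqrt hle
      _ = X + Y := Real.sqrt_sq (by linarith)
  have hsqrt_t2 : Real.sqrt (t ^ 2 * ES S t) = t * Real.sqrt (ES S t) := by
    rw [Real.sqrt_mul (by positivity) (ES S t), Real.sqrt_sq ht.le]
  rw [hsqrt_t2] at hmain
  have hdiv : Real.sqrt (ES S t) / gS S t = (t * Real.sqrt (ES S t)) / (t * gS S t) := by
    rw [mul_div_mul_left _ _ ht.ne']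
  rw [hdiv]
  have hstep : (t * Real.sqrt (ES S t)) / (t * gS S t) ≤ (X + Y) / (t * gS S t) := by
    exact (div_le_div_iff_of_pos_right (mul_pos ht hgpos)).2 hmain
  refine hstep.trans (le_of_eq ?_)
  rw [hXdef, hYdef, hta]
  field_simp

/-! ### The derivative of the comparison function -/

lemma phi_deriv (B : Finset ℕ) (a : ℕ) (h0B : 0 ∈ B) (haz : a ≠ 0) (t : ℝ) :
    HasDerivAt (fun u => Real.arctan (u ^ a / Real.sqrt (gS B u)))
      (t ^ (a - 1) * PPa B a t / (Real.sqrt (gS B t) * (gS B t + t ^ (2 * a)))) t := by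
  have hA0pos : 0 < gS B t := gS_pos h0B t
  have hs0pos : 0 < Real.sqrt (gS B t) := Real.sqrt_pos.2 hA0pos
  have hs0sq : Real.sqrt (gS B t) ^ 2 = gS B t := Real.sq_sqrt hA0pos.le
  have hA0 : HasDerivAt (fun u => gS B u)
      (∑ e ∈ B, ((2 * e : ℕ) : ℝ) * t ^ (2 * e - 1)) t := by
    unfold gS
    exact HasDerivAt.fun_sum fun e _ => hasDerivAt_pow (2 * e) t
  set A0' := ∑ e ∈ B, ((2 * e : ℕ) : ℝ) * t ^ (2 * e - 1) with hA0'def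
  have hs0 : HasDerivAt (fun u => Real.sqrt (gS B u))
      (A0' / (2 * Real.sqrt (gS B t))) t := hA0.sqrt hA0pos.ne'
  have hnum : HasDerivAt (fun u => u ^ a) ((a : ℝ) * t ^ (a - 1)) t := hasDerivAt_pow a t
  have hx : HasDerivAt (fun u => u ^ a / Real.sqrt (gS B u))
      (((a : ℝ) * t ^ (a - 1) * Real.sqrt (gS B t)
        - t ^ a * (A0' / (2 * Real.sqrt (gS B t)))) / Real.sqrt (gS B t) ^ 2) t :=
    hnum.div hs0 hs0pos.ne'
  have harc := hx.arctan
  convert harc using 1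
  have hA1rel : t * A0' = 2 * A1S B t := by
    rw [hA0'def, Finset.mul_sum, A1S, Finset.mul_sum]
    refine Finset.sum_congr rfl fun e _ => ?_
    cases e with
    | zero => simp
    | succ m =>
      have h1 : 2 * (m + 1) - 1 = 2 * m + 1 := by omega
      have h2 : 2 * (m + 1) = (2 * m + 1) + 1 := by omega
      rw [h1, h2, pow_succ]
      push_cast
      ring
  have hta : t ^ a = t ^ (a - 1) * t := by
    conv_lhs => rw [show a = (a - 1) + 1 by omega]
    rw [pow_succ]
  have h2a : t ^ (2 * a) = (t ^ a) ^ 2 := by rw [mul_comm, pow_mul]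
  have htaA0' : t ^ a * A0' = t ^ (a - 1) * (2 * A1S B t) := by
    rw [hta, mul_assoc, hA1rel]
  rw [PPa, h2a]
  set s0 := Real.sqrt (gS B t) with hs0def
  rw [div_eq_iff (by positivity : (s0 * (gS B t + (t ^ a) ^ 2)) ≠ 0)]
  rw [eq_comm, mul_comm]
  rw [mul_comm (1 / (1 + (t ^ a / s0) ^ 2))]
  field_simp
  rw [htaA0', ← hs0sq]
  ring

/-! ### Continuity lemmas -/

lemma continuous_gS (S : Finset ℕ) : Continuous (gS S) := by
  unfold gS; exact continuous_finset_sum _ fun e _ => continuous_pow _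

lemma continuous_hS (S : Finset ℕ) : Continuous (hS S) := by
  unfold hS; exact continuous_finset_sum _ fun e _ => (continuous_const.mul (continuous_pow _))

lemma continuous_qS (S : Finset ℕ) : Continuous (qS S) := by
  unfold qS; exact continuous_finset_sum _ fun e _ => (continuous_const.mul (continuous_pow _))

lemma continuous_ES (S : Finset ℕ) : Continuous (ES S) := by
  unfold ES; exact ((continuous_gS S).mul (continuous_hS S)).sub ((continuous_qS S).pow 2)

lemma continuous_A1S (S : Finset ℕ) : Continuous (A1S S) := by
  unfold A1S; exact continuous_finset_sum _ fun e _ => (continuous_const.mul (continuous_pow _))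

lemma continuous_f (S : Finset ℕ) (h0 : 0 ∈ S) :
    Continuous (fun t => Real.sqrt (ES S t) / gS S t) :=
  (Real.continuous_sqrt.comp (continuous_ES S)).div (continuous_gS S)
    fun t => (gS_pos h0 t).ne'

lemma continuous_DD (B : Finset ℕ) (a : ℕ) (h0B : 0 ∈ B) :
    Continuous (fun t => t ^ (a - 1) * PPa B a t /
      (Real.sqrt (gS B t) * (gS B t + t ^ (2 * a)))) := by
  refine ((continuous_pow _).mul (continuous_const.mul (continuous_gS B)
    |>.sub (continuous_A1S B))).div
    ((Real.continuous_sqrt.comp (continuous_gS B)).mul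
      ((continuous_gS B).add (continuous_pow _))) fun t => ?_
  have h1 : 0 < gS B t := gS_pos h0B t
  have h2 : 0 ≤ t ^ (2 * a) := pow_two_mul_nonneg t a
  have h3 : 0 < Real.sqrt (gS B t) := Real.sqrt_pos.2 h1
  have h4 : (0:ℝ) < gS B t + t ^ (2 * a) := by linarith
  positivity

/-! ### The main inductive bound -/

lemma ES_zero (t : ℝ) : ES {0} t = 0 := by
  unfold ES gS hS qS
  simp

lemma main_bound : ∀ (n : ℕ) (S : Finset ℕ), 0 ∈ S → S.card = n →
    (∫ t in (0:ℝ)..1, Real.sqrt (ES S t) / gS S t) ≤ bnd n := by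
  intro n
  induction n with
  | zero =>
    intro S h0 hc
    have : 0 < S.card := Finset.card_pos.2 ⟨0, h0⟩
    omega
  | succ n ih =>
    intro S h0 hc
    by_cases hn : n = 0
    · subst hn
      have hS1 : S = {0} := by
        obtain ⟨x, hx⟩ := Finset.card_eq_one.1 hc
        rw [hx] at h0 ⊢
        simp_all
      subst hS1
      have hz : (∫ t in (0:ℝ)..1, Real.sqrt (ES {0} t) / gS {0} t) = 0 := by
        have he : (fun t => Real.sqrt (ES {0} t) / gS {0} t) = fun _ => (0:ℝ) := by
          funext t; rw [ES_zero]; simp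
        rw [he]
        simp
      rw [hz]
      unfold bnd
      simp
    · have hSne : S.Nonempty := ⟨0, h0⟩
      set a := S.max' hSne with hadef
      have ha : a ∈ S := S.max'_mem hSne
      have hmax : ∀ e ∈ S, e ≤ a := fun e he => S.le_max' e he
      have haz : a ≠ 0 := by
        intro h
        have hsub : S ⊆ {0} := by
          intro e he
          have := hmax e he
          simp [h] at this
          simp [this]
        have := Finset.card_le_card hsub
        simp at this
        omega
      set B := S.erase a with hBdef
      have h0B : 0 ∈ B := Finset.mem_erase.2 ⟨Ne.symm haz, h0⟩
      have hcB : B.card = n := by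
        rw [hBdef, Finset.card_erase_of_mem ha, hc]
        omega
      set f : ℝ → ℝ := fun t => Real.sqrt (ES S t) / gS S t with hfdef
      set fB : ℝ → ℝ := fun t => Real.sqrt (ES B t) / gS B t with hfBdef
      set DD : ℝ → ℝ := fun t => t ^ (a - 1) * PPa B a t /
        (Real.sqrt (gS B t) * (gS B t + t ^ (2 * a))) with hDDdef
      have hcf : Continuous f := continuous_f S h0
      have hcfB : Continuous fB := continuous_f B h0B
      have hcDD : Continuous DD := continuous_DD B a h0B
      have hDDeq : ∀ t : ℝ, DD t = t ^ (a - 1) * PPa B a t /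
          (Real.sqrt (gS B t) * gS S t) := by
        intro t
        rw [hDDdef]
        simp only
        rw [← gS_split ha t]
      have hmono : (∫ t in (0:ℝ)..1, f t) ≤ ∫ t in (0:ℝ)..1, (DD t + fB t) := by
        rw [intervalIntegral.integral_of_le zero_le_one,
          intervalIntegral.integral_of_le zero_le_one]
        refine MeasureTheory.setIntegral_mono_on
          (hcf.intervalIntegrable 0 1).1 ((hcDD.add hcfB).intervalIntegrable 0 1).1
          measurableSet_Ioc fun t htt => ?_
        have ht : 0 < t := htt.1
        have hkey := key_pointwise ha hmax haz h0B ht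
        rw [hfdef, hfBdef, hDDeq t]
        exact hkey
      have hsplit : (∫ t in (0:ℝ)..1, (DD t + fB t)) =
          (∫ t in (0:ℝ)..1, DD t) + ∫ t in (0:ℝ)..1, fB t :=
        intervalIntegral.integral_add (hcDD.intervalIntegrable 0 1)
          (hcfB.intervalIntegrable 0 1)
      have hftc : (∫ t in (0:ℝ)..1, DD t) = Real.arctan (1 / Real.sqrt (n : ℝ)) := by
        have hder : ∀ t ∈ Set.uIcc (0:ℝ) 1,
            HasDerivAt (fun u => Real.arctan (u ^ a / Real.sqrt (gS B u))) (DD t) t :=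
          fun t _ => phi_deriv B a h0B haz t
        rw [intervalIntegral.integral_eq_sub_of_hasDerivAt hder
          (hcDD.intervalIntegrable 0 1)]
        have h1 : gS B 1 = (n : ℝ) := by
          unfold gS
          simp only [one_pow]
          rw [Finset.sum_const, nsmul_eq_mul, mul_one, hcB]
        have h0' : (0:ℝ) ^ a = 0 := zero_pow haz
        rw [h1, h0']
        simp
      have hIH := ih B h0B hcB
      have hbnd : bnd (n + 1) = bnd n + Real.arctan (1 / Real.sqrt (n : ℝ)) := by
        unfold bnd
        have h1 : n + 1 - 1 = (n - 1) + 1 := by omega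
        rw [h1, Finset.sum_range_succ]
        have h2 : ((n - 1 : ℕ) : ℝ) + 1 = (n : ℝ) := by
          have : (1:ℕ) ≤ n := by omega
          push_cast [Nat.cast_sub this]
          ring
        rw [h2]
      rw [hbnd]
      calc (∫ t in (0:ℝ)..1, f t) ≤ (∫ t in (0:ℝ)..1, DD t) + ∫ t in (0:ℝ)..1, fB t := by
            rw [← hsplit]; exact hmono
        _ ≤ Real.arctan (1 / Real.sqrt (n : ℝ)) + bnd n := by
            rw [hftc]; linarith
        _ = bnd n + Real.arctan (1 / Real.sqrt (n : ℝ)) := by ring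

/-! ### Estimating the sum of arctangents -/

lemma arctan_le_self {x : ℝ} (hx : 0 ≤ x) : Real.arctan x ≤ x := by
  rcases eq_or_lt_of_le hx with h | h
  · simp [← h]
  · have h1 : 0 < Real.arctan x := by
      have := Real.arctan_strictMono h
      rwa [Real.arctan_zero] at this
    have h2 : Real.arctan x < π / 2 := Real.arctan_lt_pi_div_two x
    have h3 := Real.lt_tan h1 h2
    rw [Real.tan_arctan] at h3
    exact h3.le

lemma inv_sqrt_le_telescope (x : ℝ) (hx : 0 ≤ x) :
    1 / Real.sqrt (x + 2) ≤ 2 * (Real.sqrt (x + 2) - Real.sqrt (x + 1)) := by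
  have hu : 0 < Real.sqrt (x + 2) := Real.sqrt_pos.2 (by linarith)
  have hv : 0 ≤ Real.sqrt (x + 1) := Real.sqrt_nonneg _
  have hu2 : Real.sqrt (x + 2) ^ 2 = x + 2 := Real.sq_sqrt (by linarith)
  have hv2 : Real.sqrt (x + 1) ^ 2 = x + 1 := Real.sq_sqrt (by linarith)
  rw [div_le_iff₀ hu]
  nlinarith [sq_nonneg (Real.sqrt (x + 2) - Real.sqrt (x + 1))]

lemma bnd_le (k : ℕ) (hk : 2 ≤ k) :
    bnd k ≤ π / 4 + 2 * (Real.sqrt ((k : ℝ) - 1) - 1) := by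
  unfold bnd
  have h1 : k - 1 = (k - 2) + 1 := by omega
  rw [h1, Finset.sum_range_succ']
  have hfirst : Real.arctan (1 / Real.sqrt ((0 : ℕ) + (1:ℝ))) = π / 4 := by
    norm_num [Real.sqrt_one, Real.arctan_one]
  rw [hfirst]
  have hterm : ∀ j ∈ Finset.range (k - 2),
      Real.arctan (1 / Real.sqrt (((j + 1 : ℕ) : ℝ) + 1)) ≤
        2 * Real.sqrt ((j : ℝ) + 2) - 2 * Real.sqrt ((j : ℝ) + 1) := by
    intro j _
    have hc : ((j + 1 : ℕ) : ℝ) + 1 = (j : ℝ) + 2 := by push_cast; ring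
    rw [hc]
    have h2 : (0:ℝ) ≤ 1 / Real.sqrt ((j : ℝ) + 2) := by positivity
    calc Real.arctan (1 / Real.sqrt ((j : ℝ) + 2)) ≤ 1 / Real.sqrt ((j : ℝ) + 2) :=
          arctan_le_self h2
      _ ≤ 2 * (Real.sqrt ((j : ℝ) + 2) - Real.sqrt ((j : ℝ) + 1)) :=
          inv_sqrt_le_telescope (j : ℝ) (by positivity)
      _ = 2 * Real.sqrt ((j : ℝ) + 2) - 2 * Real.sqrt ((j : ℝ) + 1) := by ring
  have hsum := Finset.sum_le_sum hterm
  have htel : ∑ j ∈ Finset.range (k - 2),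
      (2 * Real.sqrt ((j : ℝ) + 2) - 2 * Real.sqrt ((j : ℝ) + 1)) =
      2 * Real.sqrt (((k - 2 : ℕ) : ℝ) + 1) - 2 * Real.sqrt ((0 : ℝ) + 1) := by
    have hts := Finset.sum_range_sub (fun j => 2 * Real.sqrt ((j : ℝ) + 1)) (k - 2)
    calc ∑ j ∈ Finset.range (k - 2),
        (2 * Real.sqrt ((j : ℝ) + 2) - 2 * Real.sqrt ((j : ℝ) + 1))
        = ∑ j ∈ Finset.range (k - 2),
          (2 * Real.sqrt (((j + 1 : ℕ) : ℝ) + 1) - 2 * Real.sqrt ((j : ℝ) + 1)) := by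
          refine Finset.sum_congr rfl fun j _ => ?_
          have : ((j + 1 : ℕ) : ℝ) + 1 = (j : ℝ) + 2 := by push_cast; ring
          rw [this]
      _ = 2 * Real.sqrt (((k - 2 : ℕ) : ℝ) + 1) - 2 * Real.sqrt (((0:ℕ) : ℝ) + 1) := hts
      _ = 2 * Real.sqrt (((k - 2 : ℕ) : ℝ) + 1) - 2 * Real.sqrt ((0 : ℝ) + 1) := by norm_num
  have hcast : ((k - 2 : ℕ) : ℝ) + 1 = (k : ℝ) - 1 := by
    have h2k : (2:ℕ) ≤ k := hk
    push_cast [Nat.cast_sub h2k]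
    ring
  rw [htel, hcast] at hsum
  have hone : Real.sqrt ((0:ℝ) + 1) = 1 := by norm_num
  rw [hone] at hsum
  linarith

/-! ### The main theorem -/

theorem stmt0 (S : Finset ℕ) (k : ℕ) (h0 : 0 ∈ S) (hcard : S.card = k) (hk : 2 ≤ k) :
    zS S ≤ 1 / 4 + (2 / Real.pi) * (Real.sqrt ((k : ℝ) - 1) - 1) ∧
    zS S ≤ (2 / Real.pi) * Real.sqrt ((k : ℝ) - 1) := by
  have hpi : 0 < π := Real.pi_pos
  have hI := (main_bound k S h0 hcard).trans (bnd_le k hk)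
  have h1 : zS S ≤ 1 / 4 + (2 / π) * (Real.sqrt ((k : ℝ) - 1) - 1) := by
    unfold zS
    have hmul : (1 / π) * (∫ t in (0:ℝ)..1, Real.sqrt (ES S t) / gS S t) ≤
        (1 / π) * (π / 4 + 2 * (Real.sqrt ((k : ℝ) - 1) - 1)) := by
      apply mul_le_mul_of_nonneg_left hI
      positivity
    refine hmul.trans (le_of_eq ?_)
    have e1 : (1 / π) * (π / 4) = 1 / 4 := by field_simp
    have e2 : (1 / π) * (2 * (Real.sqrt ((k : ℝ) - 1) - 1)) =
        (2 / π) * (Real.sqrt ((k : ℝ) - 1) - 1) := by ring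
    rw [mul_add, e1, e2]
  refine ⟨h1, h1.trans ?_⟩
  have hpi4 : π ≤ 4 := by linarith [Real.pi_lt_d2]
  have h2 : (1:ℝ) / 4 ≤ 2 / π := by
    rw [div_le_div_iff₀ (by norm_num) hpi]
    linarith
  linarith [h2, mul_comm (2 / π) (Real.sqrt ((k : ℝ) - 1))]
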